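/- arXiv:1902.08668 — 3 statements merged into one kernel-verified Lean document; each statement's English description precedes it below -/
import Mathlib

section
/- For any real numbers 0 ≤ S ≤ T and any a ∈ [0,1], one has T^{a+1} - S^{a+1} ≤ (T + S)·(T - S)^a. -/
lemma rpow_add_le_add_rpow_real (x y p : ℝ) (hx : 0 ≤ x) (hy : 0 ≤ y)
    (hp : 0 ≤ p) (hp1 : p ≤ 1) : (x + y) ^ p ≤ x ^ p + y ^ p := by
  lift x to NNReal using hx
  lift y to NNReal using hy
  have := NNReal.rpow_add_le_add_rpow x y hp hp1
  exact_mod_cast this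

theorem power_difference_bound (S T a : ℝ) (hS : 0 ≤ S) (hST : S ≤ T)
    (ha0 : 0 ≤ a) (ha1 : a ≤ 1) :
    T ^ (a + 1) - S ^ (a + 1) ≤ (T + S) * (T - S) ^ a := by
  have hT : 0 ≤ T := hS.trans hST
  have hu : 0 ≤ T - S := sub_nonneg.2 hST
  have hsplit : ∀ x : ℝ, 0 ≤ x → x ^ (a + 1) = x * x ^ a := by
    intro x hx
    rcases hx.eq_or_lt with rfl | hx
    · rw [Real.zero_rpow (by positivity : (0:ℝ) < a + 1).ne', zero_mul]
    · rw [Real.rpow_add hx, Real.rpow_one]; ring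
  -- key1 : T^a ≤ (T-S)^a + S^a
  have key1 : T ^ a ≤ (T - S) ^ a + S ^ a := by
    have := rpow_add_le_add_rpow_real (T - S) S a hu hS ha0 ha1
    simpa using this
  -- key2 : (T-S) * T^a ≤ T * (T-S)^a
  have key2 : (T - S) * T ^ a ≤ T * (T - S) ^ a := by
    rcases hu.eq_or_lt with h0 | h0
    · rw [← h0, zero_mul]
      positivity
    · have hTpos : 0 < T := lt_of_lt_of_le h0 (by linarith)
      have e1 : T - S = (T - S) ^ (1 - a) * (T - S) ^ a := by
        rw [← Real.rpow_add h0]; norm_num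
      have e2 : T = T ^ (1 - a) * T ^ a := by
        rw [← Real.rpow_add hTpos]; norm_num
      have h3 : (T - S) ^ (1 - a) ≤ T ^ (1 - a) :=
        Real.rpow_le_rpow hu (by linarith) (by linarith)
      calc (T - S) * T ^ a = (T - S) ^ (1 - a) * ((T - S) ^ a * T ^ a) := by
              conv_lhs => rw [e1]
              ring
        _ ≤ T ^ (1 - a) * ((T - S) ^ a * T ^ a) := by
              apply mul_le_mul_of_nonneg_right h3; positivity
        _ = T * (T - S) ^ a := by
              rw [show T ^ (1 - a) * ((T - S) ^ a * T ^ a)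
                    = T ^ (1 - a) * T ^ a * (T - S) ^ a from by ring, ← e2]
  rw [hsplit T hT, hsplit S hS]
  nlinarith [mul_le_mul_of_nonneg_left key1 hS, key2]
end

section
/- Let γ > 0, σ ∈ (0, 1/γ], integers 0 ≤ S ≤ T-1 with S ≤ ((K-1)/(K+1))·T for some K ≥ 1, and u ∈ [0,1]. Then σ^u · G_{S,T}(σ) ≤ K · γ^{1-u} · (T - S)^{1-u}, where G_{S,T}(σ) = (1/(T-S)) ∑_{t=S+1}^T σ^{-1}(1-(1-γσ)^t). -/
theorem tail_averaged_filter_power_bound (γ σ : ℝ) (hγ : 0 < γ) (hσ : 0 < σ)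
    (hγσ : γ * σ ≤ 1) (S T : ℕ) (hST : S + 1 ≤ T) (K : ℝ) (hK : 1 ≤ K)
    (hSK : (S : ℝ) ≤ (K - 1) / (K + 1) * T) (u : ℝ) (hu0 : 0 ≤ u) (hu1 : u ≤ 1) :
    σ ^ u * ((1 / ((T : ℝ) - S)) *
        ∑ t ∈ Finset.Icc (S + 1) T, σ⁻¹ * (1 - (1 - γ * σ) ^ t)) ≤
      K * γ ^ (1 - u) * ((T : ℝ) - S) ^ (1 - u) := by
  have hSTr : (S : ℝ) + 1 ≤ T := by exact_mod_cast hST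
  have hT : 0 < (T : ℝ) - S := by linarith
  have hT0 : 0 < (T : ℝ) := by linarith
  have hx0 : 0 < γ * σ := mul_pos hγ hσ
  have hσu : 0 < σ ^ u := Real.rpow_pos_of_pos hσ u
  -- pointwise bound
  have key : ∀ t ∈ Finset.Icc (S + 1) T,
      σ ^ u * (σ⁻¹ * (1 - (1 - γ * σ) ^ t)) ≤ (γ * T) ^ (1 - u) := by
    intro t ht
    obtain ⟨ht1, ht2⟩ := Finset.mem_Icc.mp ht
    have htT : (t : ℝ) ≤ T := by exact_mod_cast ht2
    have h1x0 : 0 ≤ 1 - γ * σ := by linarith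
    have htne : t ≠ 0 := by omega
    have hpow1 : (1 - γ * σ) ^ t < 1 :=
      pow_lt_one₀ h1x0 (by linarith) htne
    set a := 1 - (1 - γ * σ) ^ t with ha
    have hpow0 : 0 ≤ (1 - γ * σ) ^ t := pow_nonneg h1x0 t
    have ha0 : 0 < a := by simp only [ha]; linarith
    have ha1 : a ≤ 1 := by simp only [ha]; linarith
    have hbern : 1 - (t : ℝ) * (γ * σ) ≤ (1 - γ * σ) ^ t := by
      have := one_add_mul_le_pow (a := -(γ * σ)) (by linarith) t
      have h2 : 1 + (t : ℝ) * (-(γ * σ)) ≤ (1 + -(γ * σ)) ^ t := this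
      calc 1 - (t : ℝ) * (γ * σ) = 1 + (t : ℝ) * (-(γ * σ)) := by ring
        _ ≤ (1 + -(γ * σ)) ^ t := h2
        _ = (1 - γ * σ) ^ t := by ring_nf
    have haTx : a ≤ (γ * T) * σ := by
      have : a ≤ (t : ℝ) * (γ * σ) := by simp only [ha]; linarith
      have h2 : (t : ℝ) * (γ * σ) ≤ (T : ℝ) * (γ * σ) := by nlinarith
      nlinarith
    have hγT0 : 0 ≤ (γ * T) * σ := by positivity
    have harpow : a ≤ ((γ * T) * σ) ^ (1 - u) := by
      calc a = a ^ (1 : ℝ) := (Real.rpow_one a).symm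
        _ ≤ a ^ (1 - u) :=
          Real.rpow_le_rpow_of_exponent_ge ha0 ha1 (by linarith)
        _ ≤ ((γ * T) * σ) ^ (1 - u) :=
          Real.rpow_le_rpow (le_of_lt ha0) haTx (by linarith)
    have hmul : ((γ * T) * σ) ^ (1 - u) = (γ * T) ^ (1 - u) * σ ^ (1 - u) :=
      Real.mul_rpow (by positivity) (le_of_lt hσ)
    have hσinv : σ ^ u * σ⁻¹ = σ ^ (u - 1) := by
      rw [← Real.rpow_neg_one σ, ← Real.rpow_add hσ]
      ring_nf
    have hcancel : σ ^ (u - 1) * σ ^ (1 - u) = 1 := by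
      rw [← Real.rpow_add hσ]
      norm_num
    calc σ ^ u * (σ⁻¹ * a) = σ ^ (u - 1) * a := by rw [← mul_assoc, hσinv]
      _ ≤ σ ^ (u - 1) * ((γ * T) ^ (1 - u) * σ ^ (1 - u)) := by
          rw [← hmul]
          exact mul_le_mul_of_nonneg_left harpow (le_of_lt (Real.rpow_pos_of_pos hσ _))
      _ = (γ * T) ^ (1 - u) * (σ ^ (u - 1) * σ ^ (1 - u)) := by ring
      _ = (γ * T) ^ (1 - u) := by rw [hcancel, mul_one]
  -- sum bound
  have hcard : ((Finset.Icc (S + 1) T).card : ℝ) = (T : ℝ) - S := by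
    rw [Nat.card_Icc]
    have : T + 1 - (S + 1) = T - S := by omega
    rw [this, Nat.cast_sub (by omega)]
  have hsum : σ ^ u * ((1 / ((T : ℝ) - S)) *
      ∑ t ∈ Finset.Icc (S + 1) T, σ⁻¹ * (1 - (1 - γ * σ) ^ t)) ≤ (γ * T) ^ (1 - u) := by
    have h1 : ∑ t ∈ Finset.Icc (S + 1) T, σ ^ u * (σ⁻¹ * (1 - (1 - γ * σ) ^ t)) ≤
        ((T : ℝ) - S) * (γ * T) ^ (1 - u) := by
      calc ∑ t ∈ Finset.Icc (S + 1) T, σ ^ u * (σ⁻¹ * (1 - (1 - γ * σ) ^ t))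
          ≤ ∑ t ∈ Finset.Icc (S + 1) T, (γ * T) ^ (1 - u) := Finset.sum_le_sum key
        _ = ((T : ℝ) - S) * (γ * T) ^ (1 - u) := by
            rw [Finset.sum_const, nsmul_eq_mul, hcard]
    rw [mul_left_comm, Finset.mul_sum]
    rw [div_mul_eq_mul_div, one_mul, div_le_iff₀ hT]
    linarith [h1]
  -- final bound
  have hK1 : (0 : ℝ) < K + 1 := by linarith
  have hTK : (T : ℝ) ≤ K * ((T : ℝ) - S) := by
    rw [div_mul_eq_mul_div] at hSK
    have h := (le_div_iff₀ hK1).mp hSK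
    nlinarith [h]
  have hfin : (γ * T) ^ (1 - u) ≤ K * γ ^ (1 - u) * ((T : ℝ) - S) ^ (1 - u) := by
    have h1u : 0 ≤ 1 - u := by linarith
    calc (γ * T) ^ (1 - u) = γ ^ (1 - u) * (T : ℝ) ^ (1 - u) :=
          Real.mul_rpow hγ.le hT0.le
      _ ≤ γ ^ (1 - u) * (K * ((T : ℝ) - S)) ^ (1 - u) := by
          apply mul_le_mul_of_nonneg_left _ (Real.rpow_pos_of_pos hγ _).le
          exact Real.rpow_le_rpow hT0.le hTK h1u
      _ = γ ^ (1 - u) * (K ^ (1 - u) * ((T : ℝ) - S) ^ (1 - u)) := by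
          rw [Real.mul_rpow (by linarith) hT.le]
      _ ≤ γ ^ (1 - u) * (K * ((T : ℝ) - S) ^ (1 - u)) := by
          apply mul_le_mul_of_nonneg_left _ (Real.rpow_pos_of_pos hγ _).le
          apply mul_le_mul_of_nonneg_right _ (Real.rpow_pos_of_pos hT _).le
          calc K ^ (1 - u) ≤ K ^ (1 : ℝ) :=
                Real.rpow_le_rpow_of_exponent_le hK (by linarith)
            _ = K := Real.rpow_one K
      _ = K * γ ^ (1 - u) * ((T : ℝ) - S) ^ (1 - u) := by ring
  linarith [hsum, hfin]
end

section
/- Let H be a bounded self-adjoint positive semidefinite operator on a separable Hilbert space with eigenvalues (σ_j) and let α ∈ (0,1], u ∈ [0, 1+α], γ > 0 with γ‖H‖ ≤ 1, and L ≥ 1 an integer. Then Tr[H^{u-1}(I - (I-γH)^L)^2] ≤ γ^{1-u+α} · Tr[H^α] · L^{1-u+α}, where H^{-β} is interpreted via spectral calculus on the range of H. -/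
lemma key_pointwise (γ α u : ℝ) (hγ : 0 < γ)
    (hα0 : 0 < α) (hα1 : α ≤ 1) (hu0 : 0 ≤ u) (hu1 : u ≤ 1 + α)
    (s : ℝ) (hs : 0 ≤ s) (h1 : γ * s ≤ 1) (L : ℕ) (hL : 1 ≤ L) :
    s ^ (u - 1) * (1 - (1 - γ * s) ^ L) ^ 2 ≤
      γ ^ (1 - u + α) * (L : ℝ) ^ (1 - u + α) * s ^ α := by
  set e := 1 - u + α with he
  have he0 : 0 ≤ e := by simp [he]; linarith
  have he2 : e ≤ 2 := by simp [he]; linarith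
  rcases eq_or_lt_of_le hs with h0 | hpos
  · rw [← h0]
    simp [Real.zero_rpow (ne_of_gt hα0)]
  · have hγs : 0 < γ * s := mul_pos hγ hpos
    set t := 1 - (1 - γ * s) ^ L with htdef
    have hb0 : 0 ≤ 1 - γ * s := by linarith
    have hb1 : 1 - γ * s < 1 := by linarith
    have ht0 : 0 < t := by
      have := pow_lt_one₀ hb0 hb1 (by omega : L ≠ 0)
      simp [htdef]; linarith
    have ht1 : t ≤ 1 := by
      have := pow_nonneg hb0 L
      simp [htdef]; linarith
    have htL : t ≤ L * (γ * s) := by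
      have := one_add_mul_le_pow (a := -(γ * s)) (by linarith) L
      simp only [htdef]
      have h2 : (1 + -(γ * s)) = 1 - γ * s := by ring
      rw [h2] at this
      nlinarith
    have step1 : t ^ 2 ≤ t ^ e := by
      rw [← Real.rpow_two]
      exact Real.rpow_le_rpow_of_exponent_ge ht0 ht1 he2
    have step2 : t ^ e ≤ ((L : ℝ) * (γ * s)) ^ e :=
      Real.rpow_le_rpow ht0.le htL he0
    have step3 : ((L : ℝ) * (γ * s)) ^ e = (L : ℝ) ^ e * (γ ^ e * s ^ e) := by
      rw [Real.mul_rpow (by positivity) (by positivity),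
        Real.mul_rpow hγ.le hpos.le]
    have hsp : (0:ℝ) < s ^ (u - 1) := Real.rpow_pos_of_pos hpos _
    have key : s ^ (u - 1) * (t ^ 2) ≤ s ^ (u - 1) * ((L : ℝ) ^ e * (γ ^ e * s ^ e)) := by
      apply mul_le_mul_of_nonneg_left _ hsp.le
      calc t ^ 2 ≤ t ^ e := step1
        _ ≤ ((L : ℝ) * (γ * s)) ^ e := step2
        _ = (L : ℝ) ^ e * (γ ^ e * s ^ e) := step3
    calc s ^ (u - 1) * t ^ 2 ≤ s ^ (u - 1) * ((L : ℝ) ^ e * (γ ^ e * s ^ e)) := key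
      _ = γ ^ e * (L : ℝ) ^ e * (s ^ (u - 1) * s ^ e) := by ring
      _ = γ ^ e * (L : ℝ) ^ e * s ^ α := by
          rw [← Real.rpow_add hpos]
          congr 1
          simp [he]; ring_nf

theorem trace_power_residual_bound (γ α u : ℝ) (hγ : 0 < γ)
    (hα0 : 0 < α) (hα1 : α ≤ 1) (hu0 : 0 ≤ u) (hu1 : u ≤ 1 + α)
    (σ : ℕ → ℝ) (hσ0 : ∀ j, 0 ≤ σ j) (hσ1 : ∀ j, γ * σ j ≤ 1)
    (L : ℕ) (hL : 1 ≤ L) (hsum : Summable fun j => σ j ^ α) :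
    ∑' j : ℕ, σ j ^ (u - 1) * (1 - (1 - γ * σ j) ^ L) ^ 2 ≤
      γ ^ (1 - u + α) * (∑' j : ℕ, σ j ^ α) * (L : ℝ) ^ (1 - u + α) := by
  have key := fun j => key_pointwise γ α u hγ hα0 hα1 hu0 hu1 (σ j) (hσ0 j) (hσ1 j) L hL
  have hnn : ∀ j, 0 ≤ σ j ^ (u - 1) * (1 - (1 - γ * σ j) ^ L) ^ 2 := fun j => by
    have := Real.rpow_nonneg (hσ0 j) (u - 1)
    positivity
  have hg : Summable fun j => γ ^ (1 - u + α) * (L : ℝ) ^ (1 - u + α) * σ j ^ α := by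
    simpa [mul_assoc] using (hsum.mul_left (γ ^ (1 - u + α) * (L : ℝ) ^ (1 - u + α)))
  have hf : Summable fun j => σ j ^ (u - 1) * (1 - (1 - γ * σ j) ^ L) ^ 2 :=
    Summable.of_nonneg_of_le hnn key hg
  calc ∑' j : ℕ, σ j ^ (u - 1) * (1 - (1 - γ * σ j) ^ L) ^ 2
      ≤ ∑' j, γ ^ (1 - u + α) * (L : ℝ) ^ (1 - u + α) * σ j ^ α := Summable.tsum_le_tsum key hf hg
    _ = γ ^ (1 - u + α) * (L : ℝ) ^ (1 - u + α) * ∑' j, σ j ^ α := by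
        rw [tsum_mul_left]
    _ = γ ^ (1 - u + α) * (∑' j, σ j ^ α) * (L : ℝ) ^ (1 - u + α) := by ring
end
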